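/- Let x ∈ ℝ^m have support N := {i : x_i ≠ 0}, let T ⊆ {1,…,m} with Δ := N \ T nonempty, and let y = A x + w with ‖w‖₂ ≤ ε. Suppose some δ < (√2 − 1)/2 is a 2|Δ|-restricted isometry bound for A, some δ′ < 1/2 is a |T|-restricted isometry bound for A, and θ is a (|T|,|Δ|)-restricted orthogonality bound for A. Let x̂_init be the LS estimate on T from y, let ỹ := y − A·x̂_init, let β̂ be any minimizer of ‖β‖₁ over {β ∈ ℝ^m : ‖ỹ − Aβ‖₂ ≤ ε}, and set x̂_CSres := x̂_init + β̂. Then ‖x − x̂_CSres‖₂ ≤ C′·ε + θ·C″·‖x_Δ‖₂, where C′ := C₁(δ) + √2·C₂(δ)·√(|T|/|Δ|) and C″ := 2·C₂(δ)·√|T|. -/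

import Mathlib

open Finset

attribute [local instance] Classical.propDecidable

/-- Euclidean (ℓ2) norm of a finite real vector. -/
noncomputable def norm2 {k : ℕ} (v : Fin k → ℝ) : ℝ := Real.sqrt (∑ i, v i ^ 2)

/-- ℓ∞ norm (maximum absolute entry) of a finite real vector. -/
noncomputable def normInf {k : ℕ} (v : Fin k → ℝ) : ℝ := ⨆ i, |v i|

/-- Support of a vector, as a finset. -/
noncomputable def spt {k : ℕ} (v : Fin k → ℝ) : Finset (Fin k) :=
  Finset.univ.filter (fun i => v i ≠ 0)

/-- Restriction of a vector to the coordinates indexed by `T` (zero elsewhere). -/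
noncomputable def restr {k : ℕ} (T : Finset (Fin k)) (v : Fin k → ℝ) : Fin k → ℝ :=
  fun i => if i ∈ T then v i else 0

/-- `δ ∈ [0,1)` is an `S`-restricted isometry bound for `A`:
`(1-δ)‖z‖² ≤ ‖Az‖² ≤ (1+δ)‖z‖²` for every `z` with at most `S` nonzero entries. -/
def RIPBound {n m : ℕ} (A : Matrix (Fin n) (Fin m) ℝ) (S : ℕ) (δ : ℝ) : Prop :=
  0 ≤ δ ∧ δ < 1 ∧
    ∀ z : Fin m → ℝ, (spt z).card ≤ S →
      (1 - δ) * (∑ i, z i ^ 2) ≤ (∑ j, (A.mulVec z) j ^ 2) ∧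
      (∑ j, (A.mulVec z) j ^ 2) ≤ (1 + δ) * (∑ i, z i ^ 2)

/-- `θ ≥ 0` is an `(S,S')`-restricted orthogonality bound for `A`:
`|⟨Az, Az'⟩| ≤ θ‖z‖‖z'‖` for all `z, z'` with disjoint supports of cardinalities `≤ S, S'`. -/
def ROBound {n m : ℕ} (A : Matrix (Fin n) (Fin m) ℝ) (S S' : ℕ) (θ : ℝ) : Prop :=
  0 ≤ θ ∧
    ∀ z z' : Fin m → ℝ, Disjoint (spt z) (spt z') →
      (spt z).card ≤ S → (spt z').card ≤ S' →
      |∑ j, (A.mulVec z) j * (A.mulVec z') j| ≤ θ * norm2 z * norm2 z'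

/-- A modified-CS estimate with known part `T`: feasible and with minimal ℓ1 norm outside `T`
among all feasible vectors. -/
def ModCS {n m : ℕ} (A : Matrix (Fin n) (Fin m) ℝ) (y : Fin n → ℝ) (ε : ℝ)
    (T : Finset (Fin m)) (xhat : Fin m → ℝ) : Prop :=
  norm2 (fun j => y j - (A.mulVec xhat) j) ≤ ε ∧
    ∀ β : Fin m → ℝ, norm2 (fun j => y j - (A.mulVec β) j) ≤ ε →
      ∑ i ∈ Tᶜ, |xhat i| ≤ ∑ i ∈ Tᶜ, |β i|

/-- The LS estimate on `T` from `y`: supported on `T` and satisfying the normal equations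
`A_Tᵀ (y - A x̂) = 0` (equivalently `x̂_T = (A_Tᵀ A_T)⁻¹ A_Tᵀ y` when `A_T` has
full column rank). -/
def IsLS {n m : ℕ} (A : Matrix (Fin n) (Fin m) ℝ) (y : Fin n → ℝ)
    (T : Finset (Fin m)) (xhat : Fin m → ℝ) : Prop :=
  (∀ i, i ∉ T → xhat i = 0) ∧
    ∀ i ∈ T, (∑ j, A j i * (y j - (A.mulVec xhat) j)) = 0

/-- `C₁(δ) = 4√(1+δ)/(1-(√2+1)δ)`. -/
noncomputable def C1 (δ : ℝ) : ℝ := 4 * Real.sqrt (1 + δ) / (1 - (Real.sqrt 2 + 1) * δ)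

/-- `C₂(δ) = 2(1+(√2-1)δ)/(1-(√2+1)δ)`. -/
noncomputable def C2 (δ : ℝ) : ℝ := 2 * (1 + (Real.sqrt 2 - 1) * δ) / (1 - (Real.sqrt 2 + 1) * δ)

lemma norm2_nonneg {k : ℕ} (v : Fin k → ℝ) : 0 ≤ norm2 v := Real.sqrt_nonneg _

lemma sq_norm2 {k : ℕ} (v : Fin k → ℝ) : norm2 v ^ 2 = ∑ i, v i ^ 2 :=
  Real.sq_sqrt (Finset.sum_nonneg fun i _ => sq_nonneg _)

lemma norm2_le_of_sq_le {k : ℕ} {v : Fin k → ℝ} {c : ℝ} (hc : 0 ≤ c)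
    (h : ∑ i, v i ^ 2 ≤ c ^ 2) : norm2 v ≤ c := by
  have := Real.sqrt_le_sqrt h
  rwa [Real.sqrt_sq hc] at this

lemma abs_dot_le {k : ℕ} (v w : Fin k → ℝ) : |∑ i, v i * w i| ≤ norm2 v * norm2 w := by
  have h := Finset.sum_mul_sq_le_sq_mul_sq Finset.univ v w
  have h2 : (∑ i, v i * w i) ^ 2 ≤ (norm2 v * norm2 w) ^ 2 := by
    rw [mul_pow, sq_norm2, sq_norm2]; exact h
  calc |∑ i, v i * w i| = Real.sqrt ((∑ i, v i * w i) ^ 2) := (Real.sqrt_sq_eq_abs _).symm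
    _ ≤ Real.sqrt ((norm2 v * norm2 w) ^ 2) := Real.sqrt_le_sqrt h2
    _ = norm2 v * norm2 w := Real.sqrt_sq (mul_nonneg (norm2_nonneg v) (norm2_nonneg w))

lemma dot_le {k : ℕ} (v w : Fin k → ℝ) : ∑ i, v i * w i ≤ norm2 v * norm2 w :=
  (le_abs_self _).trans (abs_dot_le v w)

lemma norm2_add_le {k : ℕ} (v w : Fin k → ℝ) :
    norm2 (fun i => v i + w i) ≤ norm2 v + norm2 w := by
  apply norm2_le_of_sq_le (add_nonneg (norm2_nonneg v) (norm2_nonneg w))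
  have hd := dot_le v w
  have : ∑ i, (v i + w i) ^ 2 = (∑ i, v i ^ 2) + 2 * (∑ i, v i * w i) + ∑ i, w i ^ 2 := by
    rw [Finset.mul_sum, ← Finset.sum_add_distrib, ← Finset.sum_add_distrib]
    apply Finset.sum_congr rfl; intro i _; ring
  rw [this, ← sq_norm2 v, ← sq_norm2 w]
  nlinarith [norm2_nonneg v, norm2_nonneg w]

lemma norm2_neg {k : ℕ} (v : Fin k → ℝ) : norm2 (fun i => -(v i)) = norm2 v := by
  simp [norm2]

lemma norm2_sum_le {k : ℕ} {ι : Type*} (s : Finset ι) (f : ι → Fin k → ℝ) :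
    norm2 (fun i => ∑ j ∈ s, f j i) ≤ ∑ j ∈ s, norm2 (f j) := by
  classical
  induction s using Finset.induction with
  | empty => simp [norm2]
  | insert _ _ hx ih =>
    rename_i a s
    rw [Finset.sum_insert hx]
    calc norm2 (fun i => ∑ j ∈ insert a s, f j i)
        = norm2 (fun i => f a i + ∑ j ∈ s, f j i) := by
          congr 1; funext i; rw [Finset.sum_insert hx]
      _ ≤ norm2 (f a) + norm2 (fun i => ∑ j ∈ s, f j i) := norm2_add_le _ _
      _ ≤ norm2 (f a) + ∑ j ∈ s, norm2 (f j) := by linarith [ih]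

lemma sum_sq_restr {k : ℕ} (s : Finset (Fin k)) (v : Fin k → ℝ) :
    ∑ i, (restr s v i) ^ 2 = ∑ i ∈ s, v i ^ 2 := by
  rw [← Finset.sum_filter_add_sum_filter_not Finset.univ (fun i => i ∈ s) (fun i => (restr s v i)^2)]
  have h1 : ∀ i ∈ Finset.univ.filter (fun i => i ∈ s), (restr s v i)^2 = v i ^ 2 := by
    intro i hi; simp at hi; simp [restr, hi]
  have h2 : ∀ i ∈ Finset.univ.filter (fun i => ¬ i ∈ s), (restr s v i)^2 = 0 := by
    intro i hi; simp at hi; simp [restr, hi]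
  rw [Finset.sum_congr rfl h1, Finset.sum_congr rfl h2]
  simp [Finset.filter_mem_eq_inter]

lemma l1_le_sqrt_card {k : ℕ} (s : Finset (Fin k)) (v : Fin k → ℝ) :
    ∑ i ∈ s, |v i| ≤ Real.sqrt s.card * norm2 (restr s v) := by
  have hcs := Finset.sum_mul_sq_le_sq_mul_sq s (fun i => |v i|) (fun _ => (1:ℝ))
  simp only [mul_one, one_pow] at hcs
  have habs : ∀ i ∈ s, |v i| ^ 2 = v i ^ 2 := fun i _ => sq_abs _
  rw [Finset.sum_congr rfl habs, Finset.sum_const, nsmul_eq_mul, mul_comm, mul_one] at hcs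
  have h1 : (0:ℝ) ≤ Real.sqrt s.card * norm2 (restr s v) :=
    mul_nonneg (Real.sqrt_nonneg _) (norm2_nonneg _)
  have h2 : (∑ i ∈ s, |v i|) ^ 2 ≤ (Real.sqrt s.card * norm2 (restr s v)) ^ 2 := by
    rw [mul_pow, sq_norm2, Real.sq_sqrt (Nat.cast_nonneg _), sum_sq_restr]
    exact hcs
  calc ∑ i ∈ s, |v i| = Real.sqrt ((∑ i ∈ s, |v i|)^2) := by
        rw [Real.sqrt_sq (Finset.sum_nonneg fun i _ => abs_nonneg _)]
    _ ≤ Real.sqrt ((Real.sqrt s.card * norm2 (restr s v))^2) := Real.sqrt_le_sqrt h2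
    _ = _ := Real.sqrt_sq h1

lemma spt_restr_subset {k : ℕ} (s : Finset (Fin k)) (v : Fin k → ℝ) : spt (restr s v) ⊆ s := by
  intro i hi
  simp [spt, restr] at hi
  by_contra h
  simp [h] at hi

lemma restr_eq_self {k : ℕ} {s : Finset (Fin k)} {v : Fin k → ℝ}
    (h : ∀ i, i ∉ s → v i = 0) : restr s v = v := by
  funext i; by_cases hi : i ∈ s <;> simp [restr, hi, h]

lemma dot_mulVec_swap {n m : ℕ} (A : Matrix (Fin n) (Fin m) ℝ) (z : Fin m → ℝ) (r : Fin n → ℝ) :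
    ∑ i, z i * (∑ j, A j i * r j) = ∑ j, (A.mulVec z) j * r j := by
  simp only [Matrix.mulVec, dotProduct, Finset.sum_mul, Finset.mul_sum]
  rw [Finset.sum_comm]
  apply Finset.sum_congr rfl; intro j _
  apply Finset.sum_congr rfl; intro i _; ring

lemma mulVec_fun_add {n m : ℕ} (A : Matrix (Fin n) (Fin m) ℝ) (u v : Fin m → ℝ) :
    A.mulVec (fun i => u i + v i) = fun j => A.mulVec u j + A.mulVec v j := by
  funext j
  simp [Matrix.mulVec, dotProduct, mul_add, Finset.sum_add_distrib]

lemma mulVec_fun_sum {n m : ℕ} {ι : Type*} (A : Matrix (Fin n) (Fin m) ℝ) (s : Finset ι)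
    (f : ι → Fin m → ℝ) :
    A.mulVec (fun i => ∑ j ∈ s, f j i) = fun r => ∑ j ∈ s, A.mulVec (f j) r := by
  funext r
  simp only [Matrix.mulVec, dotProduct, Finset.mul_sum]
  rw [Finset.sum_comm]

lemma spt_zero_of_norm2_eq_zero {k : ℕ} {v : Fin k → ℝ} (h : norm2 v = 0) : v = 0 := by
  have h2 : ∑ i, v i ^ 2 = 0 := by
    have := sq_norm2 v; rw [h] at this; simpa using this.symm
  funext i
  have := (Finset.sum_eq_zero_iff_of_nonneg (fun i _ => sq_nonneg (v i))).mp h2 i (Finset.mem_univ i)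
  exact pow_eq_zero_iff (by norm_num) |>.mp this

lemma spt_smul_eq {k : ℕ} {c : ℝ} (hc : c ≠ 0) (v : Fin k → ℝ) :
    spt (fun i => c * v i) = spt v := by
  ext i; simp [spt, hc]

lemma ro_of_rip {n m : ℕ} {A : Matrix (Fin n) (Fin m) ℝ} {S : ℕ} {δ : ℝ}
    (hRIP : RIPBound A (2 * S) δ) {z z' : Fin m → ℝ}
    (hd : Disjoint (spt z) (spt z')) (hz : (spt z).card ≤ S) (hz' : (spt z').card ≤ S) :
    |∑ j, (A.mulVec z) j * (A.mulVec z') j| ≤ δ * norm2 z * norm2 z' := by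
  obtain ⟨hδ0, hδ1, hrip⟩ := hRIP
  set a := norm2 z with ha
  set b := norm2 z' with hb
  have ha0 : 0 ≤ a := norm2_nonneg z
  have hb0 : 0 ≤ b := norm2_nonneg z'
  rcases eq_or_lt_of_le ha0 with h | hapos
  · have hz0 : z = 0 := spt_zero_of_norm2_eq_zero h.symm
    subst hz0
    simp only [Matrix.mulVec_zero, Pi.zero_apply, zero_mul, Finset.sum_const_zero, abs_zero]
    positivity
  rcases eq_or_lt_of_le hb0 with h | hbpos
  · have hz0 : z' = 0 := spt_zero_of_norm2_eq_zero h.symm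
    subst hz0
    simp only [Matrix.mulVec_zero, Pi.zero_apply, mul_zero, Finset.sum_const_zero, abs_zero]
    positivity
  -- normalized vectors
  set p : Fin m → ℝ := fun i => a⁻¹ * z i with hp
  set q : Fin m → ℝ := fun i => b⁻¹ * z' i with hq
  have hane : a ≠ 0 := ne_of_gt hapos
  have hbne : b ≠ 0 := ne_of_gt hbpos
  have hsp : spt p = spt z := spt_smul_eq (inv_ne_zero hane) z
  have hsq : spt q = spt z' := spt_smul_eq (inv_ne_zero hbne) z'
  have hsum_z : ∑ i, z i ^ 2 = a ^ 2 := (sq_norm2 z).symm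
  have hsum_z' : ∑ i, z' i ^ 2 = b ^ 2 := (sq_norm2 z').symm
  have hp2 : ∑ i, p i ^ 2 = 1 := by
    simp only [hp, mul_pow, ← Finset.mul_sum, hsum_z]
    field_simp
  have hq2 : ∑ i, q i ^ 2 = 1 := by
    simp only [hq, mul_pow, ← Finset.mul_sum, hsum_z']
    field_simp
  have hpq0 : ∑ i, p i * q i = 0 := by
    apply Finset.sum_eq_zero
    intro i _
    by_cases hzi : z i = 0
    · simp [hp, hzi]
    · have hi : i ∈ spt z := by simp [spt, hzi]
      have : i ∉ spt z' := Finset.disjoint_left.mp hd hi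
      have hz'i : z' i = 0 := by by_contra hc; exact this (by simp [spt, hc])
      simp [hq, hz'i]
  have hcard_pm : ∀ (q' : Fin m → ℝ), spt q' = spt z' → (spt (fun i => p i + q' i)).card ≤ 2 * S := by
    intro q' hsq'
    have hsub : spt (fun i => p i + q' i) ⊆ spt z ∪ spt z' := by
      intro i hi
      simp only [spt, Finset.mem_filter, Finset.mem_univ, true_and] at hi
      by_contra hc
      simp only [Finset.mem_union, not_or] at hc
      have h1 : p i = 0 := by
        have : z i = 0 := by
          by_contra hne; exact hc.1 (by rw[← hsp] at *; simp [spt, hp] at *; tauto)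
        simp [hp, this]
      have h2 : q' i = 0 := by
        by_contra hne
        exact hc.2 (by rw [← hsq']; simp [spt, hne])
      exact hi (by rw [h1, h2]; ring)
    calc (spt (fun i => p i + q' i)).card ≤ (spt z ∪ spt z').card := Finset.card_le_card hsub
      _ ≤ (spt z).card + (spt z').card := Finset.card_union_le _ _
      _ ≤ 2 * S := by omega
  -- sums of squares of p ± q
  have hsum_add : ∑ i, (p i + q i) ^ 2 = 2 := by
    have : ∀ i, (p i + q i)^2 = p i ^2 + 2*(p i * q i) + q i ^2 := fun i => by ring
    simp only [this, Finset.sum_add_distrib, hp2, hq2, ← Finset.mul_sum, hpq0]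
    ring
  have hnegq : spt (fun i => -(q i)) = spt z' := by
    rw [← hsq]; ext i; simp [spt]
  have hpq0' : ∑ i, p i * (-(q i)) = 0 := by
    simp only [mul_neg, Finset.sum_neg_distrib, hpq0, neg_zero]
  have hsum_sub : ∑ i, (p i + (-(q i))) ^ 2 = 2 := by
    have : ∀ i, (p i + -(q i))^2 = p i ^2 + 2*(p i * (-(q i))) + (q i) ^2 := fun i => by ring
    simp only [this, Finset.sum_add_distrib, hp2, hq2, ← Finset.mul_sum, hpq0']
    ring
  -- RIP applied
  have hub := (hrip (fun i => p i + q i) (hcard_pm q hsq)).2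
  have hlb := (hrip (fun i => p i + q i) (hcard_pm q hsq)).1
  have hub' := (hrip (fun i => p i + (-(q i))) (hcard_pm _ hnegq)).2
  have hlb' := (hrip (fun i => p i + (-(q i))) (hcard_pm _ hnegq)).1
  rw [hsum_add] at hub hlb
  rw [hsum_sub] at hub' hlb'
  -- expand A(p ± q)
  have hApq : A.mulVec (fun i => p i + q i) = fun j => A.mulVec p j + A.mulVec q j :=
    mulVec_fun_add A p q
  have hAmq : A.mulVec (fun i => -(q i)) = fun j => -(A.mulVec q j) := by
    funext j; simp [Matrix.mulVec, dotProduct, Finset.sum_neg_distrib]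
  have hApq' : A.mulVec (fun i => p i + -(q i)) = fun j => A.mulVec p j - A.mulVec q j := by
    rw [mulVec_fun_add A p (fun i => -(q i)), hAmq]
    funext j; ring
  rw [hApq] at hub hlb
  rw [hApq'] at hub' hlb'
  have hexp : ∑ j, (A.mulVec p j + A.mulVec q j)^2 - ∑ j, (A.mulVec p j - A.mulVec q j)^2
      = 4 * ∑ j, A.mulVec p j * A.mulVec q j := by
    rw [← Finset.sum_sub_distrib, Finset.mul_sum]
    apply Finset.sum_congr rfl; intro j _; ring
  have hdotpq : |∑ j, A.mulVec p j * A.mulVec q j| ≤ δ := by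
    rw [abs_le]; constructor <;> nlinarith
  -- scale back
  have hAzp : A.mulVec z = fun j => a * A.mulVec p j := by
    funext j
    simp only [hp, Matrix.mulVec, dotProduct, Finset.mul_sum]
    apply Finset.sum_congr rfl; intro i _
    field_simp
  have hAzq : A.mulVec z' = fun j => b * A.mulVec q j := by
    funext j
    simp only [hq, Matrix.mulVec, dotProduct, Finset.mul_sum]
    apply Finset.sum_congr rfl; intro i _
    field_simp
  have : ∑ j, (A.mulVec z) j * (A.mulVec z') j = a * b * ∑ j, A.mulVec p j * A.mulVec q j := by
    rw [hAzp, hAzq, Finset.mul_sum]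
    apply Finset.sum_congr rfl; intro j _; ring
  rw [this, abs_mul, abs_mul, abs_of_pos hapos, abs_of_pos hbpos]
  calc a * b * |∑ j, A.mulVec p j * A.mulVec q j| ≤ a * b * δ := by
        apply mul_le_mul_of_nonneg_left hdotpq (by positivity)
    _ = δ * a * b := by ring

lemma tail_blocks {m S : ℕ} (hS : 1 ≤ S) (v : Fin m → ℝ) :
    ∃ B : ℕ → Finset (Fin m),
      (∀ j, (B j).card ≤ S) ∧
      (∀ j j', j ≠ j' → Disjoint (B j) (B j')) ∧
      (∀ i, v i = ∑ j ∈ Finset.range m, restr (B j) v i) ∧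
      ((∑ j ∈ Finset.Ico 1 m, norm2 (restr (B j) v)) ≤ (∑ i, |v i|) / Real.sqrt S) := by
  classical
  set g : Fin m → ℝ := fun i => -|v i| with hg
  set π := Tuple.sort g with hπ
  have hmono : ∀ {k l : Fin m}, k ≤ l → |v (π l)| ≤ |v (π k)| := by
    intro k l hkl
    have := Tuple.monotone_sort g hkl
    simp only [Function.comp_apply, hg] at this
    linarith
  set F : ℕ → Finset (Fin m) := fun j =>
    Finset.univ.filter (fun k : Fin m => j*S ≤ (k:ℕ) ∧ (k:ℕ) < j*S + S) with hF
  set B : ℕ → Finset (Fin m) := fun j => (F j).image π with hB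
  have hcardF : ∀ j, (F j).card ≤ S := by
    intro j
    have h : (F j).card ≤ (Finset.range S).card := by
      refine Finset.card_le_card_of_injOn (fun k => (k:ℕ) - j*S) ?_ ?_
      · intro k hk
        simp only [hF, Finset.mem_coe, Finset.mem_filter] at hk
        simp only [Finset.mem_coe, Finset.mem_range]
        omega
      · intro k hk l hl hkl
        simp only [hF, Finset.coe_filter, Set.mem_setOf_eq] at hk hl
        simp only at hkl
        have : (k:ℕ) = (l:ℕ) := by omega
        exact Fin.ext this
    simpa using h
  have hcard : ∀ j, (B j).card ≤ S := fun j =>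
    le_trans (Finset.card_image_le) (hcardF j)
  have hdisj : ∀ j j', j ≠ j' → Disjoint (B j) (B j') := by
    intro j j' hjj'
    rw [Finset.disjoint_left]
    intro i hij hij'
    simp only [hB, Finset.mem_image] at hij hij'
    obtain ⟨k, hk, hki⟩ := hij
    obtain ⟨k', hk', hk'i⟩ := hij'
    have : k = k' := π.injective (hki.trans hk'i.symm)
    subst this
    simp only [hF, Finset.mem_filter] at hk hk'
    rcases Nat.lt_or_ge j j' with h | h
    · have h1 : (j+1)*S ≤ j'*S := Nat.mul_le_mul_right S h
      have h2 : (j+1)*S = j*S + S := by ring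
      omega
    · rcases Nat.lt_or_ge j' j with h2 | h2
      · have h1 : (j'+1)*S ≤ j*S := Nat.mul_le_mul_right S h2
        have h3 : (j'+1)*S = j'*S + S := by ring
        omega
      · omega
  have hcover : ∀ i : Fin m, v i = ∑ j ∈ Finset.range m, restr (B j) v i := by
    intro i
    set k := π.symm i with hk
    set j₀ := (k:ℕ) / S with hj₀
    have hj₀m : j₀ < m := lt_of_le_of_lt (le_trans (Nat.div_le_self _ _) (le_refl _)) k.2
    have hmem : i ∈ B j₀ := by
      simp only [hB, Finset.mem_image]
      refine ⟨k, ?_, by simp [hk]⟩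
      simp only [hF, Finset.mem_filter]
      have h1 := Nat.div_mul_le_self (k:ℕ) S
      have h2 := Nat.mod_lt (k:ℕ) (show 0 < S by omega)
      have h3 := Nat.div_add_mod (k:ℕ) S
      have h4 : (k:ℕ)/S*S = S*((k:ℕ)/S) := Nat.mul_comm _ _
      refine ⟨Finset.mem_univ _, ?_, ?_⟩
      · simp only [hj₀]; omega
      · simp only [hj₀]; omega
    rw [Finset.sum_eq_single j₀]
    · simp [restr, hmem]
    · intro j hj hne
      have hd := hdisj j j₀ hne
      have : i ∉ B j := Finset.disjoint_left.mp hd.symm hmem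
      simp [restr, this]
    · intro h
      exact absurd (Finset.mem_range.mpr hj₀m) h
  refine ⟨B, hcard, hdisj, hcover, ?_⟩
  -- per-block bound
  have hstep : ∀ j : ℕ, norm2 (restr (B (j+1)) v) ≤ (∑ i ∈ B j, |v i|) / Real.sqrt S := by
    intro j
    have hSpos : (0:ℝ) < S := by exact_mod_cast (by omega : 0 < S)
    have hsqrtSpos : 0 < Real.sqrt S := Real.sqrt_pos.mpr hSpos
    rcases Finset.eq_empty_or_nonempty (B (j+1)) with he | hne
    · rw [he]
      have : restr (∅ : Finset (Fin m)) v = fun _ => 0 := by funext i; simp [restr]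
      rw [this]
      have : norm2 (fun _ : Fin m => (0:ℝ)) = 0 := by simp [norm2]
      rw [this]
      positivity
    · -- block j is full
      obtain ⟨i₀, hi₀⟩ := hne
      simp only [hB, Finset.mem_image] at hi₀
      obtain ⟨k₀, hk₀, _⟩ := hi₀
      simp only [hF, Finset.mem_filter] at hk₀
      have hmul : (j+1)*S = j*S + S := by ring
      have hfull : ∀ a, j*S ≤ a → a < j*S + S → a < m := by
        intro a _ ha2
        have h1 : a < (j+1)*S := by omega
        have h2 : (j+1)*S ≤ (k₀:ℕ) := by omega
        exact lt_of_lt_of_le h1 (le_trans h2 (le_of_lt k₀.2))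
      have hcardFj : (F j).card = S := by
        have : (F j) = (Finset.Ico (j*S) (j*S+S)).attachFin (fun a ha => hfull a
            (Finset.mem_Ico.mp ha).1 (Finset.mem_Ico.mp ha).2) := by
          ext k
          simp only [hF, Finset.mem_filter, Finset.mem_attachFin, Finset.mem_Ico,
            Finset.mem_univ, true_and]
        rw [this, Finset.card_attachFin, Nat.card_Ico]
        omega
      set t := (∑ i ∈ B j, |v i|) / S with ht
      have ht0 : 0 ≤ t := by
        apply div_nonneg _ (le_of_lt hSpos)
        exact Finset.sum_nonneg fun i _ => abs_nonneg _
      have hbound : ∀ i ∈ B (j+1), |v i| ≤ t := by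
        intro i hi
        simp only [hB, Finset.mem_image] at hi
        obtain ⟨k, hk, hki⟩ := hi
        simp only [hF, Finset.mem_filter] at hk
        have hsum : ∑ i' ∈ B j, |v i'| = ∑ l ∈ F j, |v (π l)| := by
          simp only [hB]
          exact Finset.sum_image (fun a _ b _ hab => π.injective hab)
        have hle : ∀ l ∈ F j, |v i| ≤ |v (π l)| := by
          intro l hl
          simp only [hF, Finset.mem_filter] at hl
          have hlk : l ≤ k := by
            rw [Fin.le_def]
            omega
          rw [← hki]
          exact hmono hlk
        have : (S:ℝ) * |v i| ≤ ∑ l ∈ F j, |v (π l)| := by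
          calc (S:ℝ) * |v i| = ∑ _l ∈ F j, |v i| := by
                rw [Finset.sum_const, hcardFj, nsmul_eq_mul]
            _ ≤ ∑ l ∈ F j, |v (π l)| := Finset.sum_le_sum hle
        rw [ht, hsum]
        rw [le_div_iff₀ hSpos]
        linarith [this]
      apply norm2_le_of_sq_le (by positivity)
      rw [sum_sq_restr]
      have h1 : ∑ i ∈ B (j+1), v i ^ 2 ≤ ∑ i ∈ B (j+1), t^2 := by
        apply Finset.sum_le_sum
        intro i hi
        have := hbound i hi
        nlinarith [abs_nonneg (v i), sq_abs (v i)]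
      have h2 : ∑ i ∈ B (j+1), t^2 ≤ S * t^2 := by
        rw [Finset.sum_const, nsmul_eq_mul]
        apply mul_le_mul_of_nonneg_right _ (sq_nonneg t)
        exact_mod_cast hcard (j+1)
      have h3 : (S:ℝ) * t^2 = ((∑ i ∈ B j, |v i|) / Real.sqrt S)^2 := by
        rw [ht, div_pow, div_pow, Real.sq_sqrt (le_of_lt hSpos)]
        field_simp
      linarith
  -- sum up
  have hsum1 : ∑ j ∈ Finset.Ico 1 m, norm2 (restr (B j) v)
      ≤ ∑ j ∈ Finset.range (m-1), (∑ i ∈ B j, |v i|) / Real.sqrt S := by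
    rw [Finset.sum_Ico_eq_sum_range]
    apply Finset.sum_le_sum
    intro j _
    rw [add_comm 1 j]
    exact hstep j
  have hsub : ∑ j ∈ Finset.range (m-1), ∑ i ∈ B j, |v i| ≤ ∑ i, |v i| := by
    rw [← Finset.sum_biUnion (by
      intro a _ b _ hab
      exact hdisj a b hab)]
    exact Finset.sum_le_sum_of_subset_of_nonneg (Finset.subset_univ _)
      (fun i _ _ => abs_nonneg _)
  have hsum2 : ∑ j ∈ Finset.range (m-1), (∑ i ∈ B j, |v i|) / Real.sqrt S
      ≤ (∑ i, |v i|) / Real.sqrt S := by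
    rw [← Finset.sum_div]
    gcongr
  exact le_trans hsum1 hsum2

lemma restr_add {k : ℕ} (T : Finset (Fin k)) (v w : Fin k → ℝ) :
    restr T (v + w) = restr T v + restr T w := by
  funext i; by_cases h : i ∈ T <;> simp [restr, h]

lemma restr_smul {k : ℕ} (T : Finset (Fin k)) (c : ℝ) (v : Fin k → ℝ) :
    restr T (c • v) = c • restr T v := by
  funext i; by_cases h : i ∈ T <;> simp [restr, h]

noncomputable def Lmap {n m : ℕ} (A : Matrix (Fin n) (Fin m) ℝ) (T : Finset (Fin m)) :
    (Fin m → ℝ) →ₗ[ℝ] (Fin m → ℝ) where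
  toFun v := fun i => if i ∈ T then ∑ j, A j i * (A.mulVec (restr T v)) j else v i
  map_add' v w := by
    funext i
    by_cases h : i ∈ T
    · simp only [h, if_true, Pi.add_apply, restr_add, Matrix.mulVec_add]
      simp [mul_add, Finset.sum_add_distrib]
    · simp [h]
  map_smul' c v := by
    funext i
    by_cases h : i ∈ T
    · simp only [h, if_true, RingHom.id_apply, Pi.smul_apply, restr_smul, Matrix.mulVec_smul]
      simp [Finset.mul_sum, smul_eq_mul]
      ring_nf
      apply Finset.sum_congr rfl; intro j _; ring
    · simp [h]

lemma exists_ls_sol {n m : ℕ} (A : Matrix (Fin n) (Fin m) ℝ) (T : Finset (Fin m))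
    {δ' : ℝ} (hRIP' : RIPBound A T.card δ') (c : Fin n → ℝ) :
    ∃ u1 : Fin m → ℝ, (∀ i, i ∉ T → u1 i = 0) ∧
      (∀ i ∈ T, ∑ j, A j i * ((A.mulVec u1) j + c j) = 0) := by
  obtain ⟨hδ0, hδ1, hrip⟩ := hRIP'
  have hinj : Function.Injective (Lmap A T) := by
    rw [← LinearMap.ker_eq_bot, LinearMap.ker_eq_bot']
    intro v hv
    have hv' : ∀ i, (if i ∈ T then ∑ j, A j i * (A.mulVec (restr T v)) j else v i) = 0 := by
      intro i; exact congrFun hv i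
    have hoff : ∀ i, i ∉ T → v i = 0 := by
      intro i hi
      have := hv' i; simp [hi] at this; exact this
    have hrestr : restr T v = v := restr_eq_self hoff
    have hzero : ∑ j, (A.mulVec (restr T v)) j ^ 2 = 0 := by
      have hswap := dot_mulVec_swap A (restr T v) (A.mulVec (restr T v))
      have : ∑ i, restr T v i * (∑ j, A j i * (A.mulVec (restr T v)) j) = 0 := by
        apply Finset.sum_eq_zero
        intro i _
        by_cases hi : i ∈ T
        · have := hv' i; simp only [hi, if_true] at this; rw [this]; ring
        · simp [restr, hi]
      rw [hswap] at this
      rw [← this]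
      apply Finset.sum_congr rfl; intro j _; ring
    have hcard : (spt (restr T v)).card ≤ T.card :=
      Finset.card_le_card (spt_restr_subset T v)
    have hlow := (hrip (restr T v) hcard).1
    rw [hzero] at hlow
    have hsum0 : ∑ i, (restr T v) i ^ 2 ≤ 0 := by nlinarith
    have : ∀ i, (restr T v) i = 0 := by
      intro i
      have hle := (Finset.sum_eq_zero_iff_of_nonneg (fun i (_ : i ∈ Finset.univ) => sq_nonneg ((restr T v) i))).mp
        (le_antisymm hsum0 (Finset.sum_nonneg fun i _ => sq_nonneg _))
      exact pow_eq_zero_iff (by norm_num) |>.mp (hle i (Finset.mem_univ i))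
    funext i
    rw [← hrestr]
    exact this i
  have hsurj : Function.Surjective (Lmap A T) := by
    exact LinearMap.injective_iff_surjective.mp hinj
  obtain ⟨u1, hu1⟩ := hsurj (fun i => if i ∈ T then -(∑ j, A j i * c j) else 0)
  have happ : ∀ i, (if i ∈ T then ∑ j, A j i * (A.mulVec (restr T u1)) j else u1 i)
      = (if i ∈ T then -(∑ j, A j i * c j) else 0) := fun i => congrFun hu1 i
  have hoff : ∀ i, i ∉ T → u1 i = 0 := by
    intro i hi
    have := happ i; simp only [hi, if_neg, ite_false] at this; exact this
  refine ⟨u1, hoff, ?_⟩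
  intro i hi
  have := happ i
  simp only [hi, if_true] at this
  rw [restr_eq_self hoff] at this
  simp only [mul_add, Finset.sum_add_distrib, this]
  ring

lemma mulVec_fun_sub {n m : ℕ} (A : Matrix (Fin n) (Fin m) ℝ) (u v : Fin m → ℝ) :
    A.mulVec (fun i => u i - v i) = fun j => A.mulVec u j - A.mulVec v j := by
  funext j
  simp [Matrix.mulVec, dotProduct, mul_sub, Finset.sum_sub_distrib]

set_option maxHeartbeats 2000000 in
/-- CS-residual (LS-CS) error bound (Lemma 8). -/
theorem csres_error_bound {n m : ℕ} (A : Matrix (Fin n) (Fin m) ℝ)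
    (x : Fin m → ℝ) (w : Fin n → ℝ) (ε δ δ' θ : ℝ) (T : Finset (Fin m))
    (hw : norm2 w ≤ ε)
    (hne : (spt x \ T).Nonempty)
    (hδ : δ < (Real.sqrt 2 - 1) / 2)
    (hRIP : RIPBound A (2 * (spt x \ T).card) δ)
    (hδ' : δ' < 1 / 2)
    (hRIP' : RIPBound A T.card δ')
    (hθ : ROBound A T.card ((spt x \ T).card) θ)
    (xinit : Fin m → ℝ)
    (hinit : IsLS A (fun j => (A.mulVec x) j + w j) T xinit)
    (betahat : Fin m → ℝ)
    (hbeta : ModCS A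
      (fun j => ((A.mulVec x) j + w j) - (A.mulVec xinit) j) ε (∅ : Finset (Fin m)) betahat) :
    norm2 (fun i => x i - (xinit i + betahat i)) ≤
      (C1 δ + Real.sqrt 2 * C2 δ * Real.sqrt ((T.card : ℝ) / ((spt x \ T).card : ℝ))) * ε +
        θ * (2 * C2 δ * Real.sqrt (T.card : ℝ)) * norm2 (restr (spt x \ T) x) := by
  classical
  obtain ⟨hθ0, hro⟩ := hθ
  obtain ⟨hinit_spt, hinit_eq⟩ := hinit
  have hδ0 : 0 ≤ δ := hRIP.1
  have hδ'0 : 0 ≤ δ' := hRIP'.1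
  have hδ'1 : δ' < 1 := hRIP'.2.1
  have hrip := hRIP.2.2
  have hrip' := hRIP'.2.2
  set Δ : Finset (Fin m) := spt x \ T with hΔ
  set S : ℕ := Δ.card with hSdef
  have hS1 : 1 ≤ S := Finset.card_pos.mpr hne
  have hε0 : 0 ≤ ε := le_trans (norm2_nonneg w) hw
  set xD : Fin m → ℝ := restr Δ x with hxD
  set X : ℝ := norm2 xD with hX
  have hX0 : 0 ≤ X := norm2_nonneg _
  have hsqrt2 : (1:ℝ) ≤ Real.sqrt 2 := by
    rw [show (1:ℝ) = Real.sqrt 1 from (Real.sqrt_one).symm]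
    exact Real.sqrt_le_sqrt (by norm_num)
  set b : Fin m → ℝ := fun i => x i - xinit i with hb
  set u : Fin m → ℝ := restr T b with hu
  have hdisjTΔ : Disjoint T Δ := (Finset.sdiff_disjoint).symm
  -- b = u + xD pointwise
  have hbu : ∀ i, b i = u i + xD i := by
    intro i
    by_cases hiT : i ∈ T
    · have hiΔ : i ∉ Δ := fun hc => (Finset.mem_sdiff.mp hc).2 hiT
      simp [hu, hxD, restr, hiT, hiΔ]
    · by_cases hiΔ : i ∈ Δ
      · have hx0 : xinit i = 0 := hinit_spt i hiT
        simp [hu, hxD, restr, hiT, hiΔ, hb, hx0]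
      · have hx0 : x i = 0 := by
          by_contra hc
          exact hiΔ (Finset.mem_sdiff.mpr ⟨by simp [spt, hc], hiT⟩)
        have hxi : xinit i = 0 := hinit_spt i hiT
        simp [hu, hxD, restr, hiT, hiΔ, hb, hx0, hxi]
  have hAb : A.mulVec b = fun j => A.mulVec u j + A.mulVec xD j := by
    rw [show b = fun i => u i + xD i from funext hbu]
    exact mulVec_fun_add A u xD
  have hAbx : A.mulVec b = fun j => A.mulVec x j - A.mulVec xinit j := by
    rw [hb]
    exact mulVec_fun_sub A x xinit
  -- normal equations for u
  have hnormal : ∀ i ∈ T, ∑ j, A j i * (A.mulVec u j + A.mulVec xD j + w j) = 0 := by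
    intro i hi
    have heq := hinit_eq i hi
    calc ∑ j, A j i * (A.mulVec u j + A.mulVec xD j + w j)
        = ∑ j, A j i * ((A.mulVec x j + w j) - A.mulVec xinit j) := by
          apply Finset.sum_congr rfl; intro j _
          have h1 : A.mulVec u j + A.mulVec xD j = A.mulVec x j - A.mulVec xinit j := by
            rw [← congrFun hAb j, congrFun hAbx j]
          linear_combination (A j i) * h1
      _ = 0 := heq
  obtain ⟨u1, hu1off, hu1eq⟩ := exists_ls_sol A T ⟨hδ'0, hδ'1, hrip'⟩ (A.mulVec xD)
  set u2 : Fin m → ℝ := fun i => u i - u1 i with hu2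
  have huoff : ∀ i, i ∉ T → u i = 0 := by
    intro i hi; simp [hu, restr, hi]
  have hu2off : ∀ i, i ∉ T → u2 i = 0 := by
    intro i hi; simp [hu2, hu1off i hi, huoff i hi]
  have hAu2 : A.mulVec u2 = fun j => A.mulVec u j - A.mulVec u1 j := by
    rw [hu2]; exact mulVec_fun_sub A u u1
  have hu2eq : ∀ i ∈ T, ∑ j, A j i * (A.mulVec u2 j + w j) = 0 := by
    intro i hi
    calc ∑ j, A j i * (A.mulVec u2 j + w j)
        = (∑ j, A j i * (A.mulVec u j + A.mulVec xD j + w j))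
          - ∑ j, A j i * (A.mulVec u1 j + A.mulVec xD j) := by
          rw [← Finset.sum_sub_distrib]
          apply Finset.sum_congr rfl; intro j _
          rw [congrFun hAu2 j]; ring
      _ = 0 := by rw [hnormal i hi, hu1eq i hi]; ring
  -- support facts
  have hsptu1 : spt u1 ⊆ T := by
    intro i hi; simp only [spt, Finset.mem_filter] at hi
    by_contra hc; exact hi.2 (hu1off i hc)
  have hsptu2 : spt u2 ⊆ T := by
    intro i hi; simp only [spt, Finset.mem_filter] at hi
    by_contra hc; exact hi.2 (hu2off i hc)
  have hsptxD : spt xD ⊆ Δ := spt_restr_subset Δ x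
  have hcardu1 : (spt u1).card ≤ T.card := Finset.card_le_card hsptu1
  have hcardu2 : (spt u2).card ≤ T.card := Finset.card_le_card hsptu2
  -- bound on u1
  have hAu1sq : ∑ j, A.mulVec u1 j ^ 2 = - ∑ j, A.mulVec u1 j * A.mulVec xD j := by
    have h0 : ∑ i, u1 i * (∑ j, A j i * (A.mulVec u1 j + A.mulVec xD j)) = 0 := by
      apply Finset.sum_eq_zero; intro i _
      by_cases hi : i ∈ T
      · rw [hu1eq i hi, mul_zero]
      · rw [hu1off i hi, zero_mul]
    rw [dot_mulVec_swap A u1 (fun j => A.mulVec u1 j + A.mulVec xD j)] at h0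
    have h1 : ∑ j, (A.mulVec u1 j ^ 2 + A.mulVec u1 j * A.mulVec xD j) = 0 := by
      rw [← h0]; apply Finset.sum_congr rfl; intro j _; ring
    rw [Finset.sum_add_distrib] at h1
    linarith
  have hn2u1 : norm2 u1 ≤ 2 * θ * X := by
    have ha0 : 0 ≤ norm2 u1 := norm2_nonneg u1
    have hlb := (hrip' u1 hcardu1).1
    rw [← sq_norm2] at hlb
    have hdu : Disjoint (spt u1) (spt xD) := hdisjTΔ.mono hsptu1 hsptxD
    have hrodot := hro u1 xD hdu hcardu1 (Finset.card_le_card hsptxD)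
    have hup : ∑ j, A.mulVec u1 j ^ 2 ≤ θ * norm2 u1 * X := by
      rw [hAu1sq]
      calc - ∑ j, A.mulVec u1 j * A.mulVec xD j
          ≤ |∑ j, A.mulVec u1 j * A.mulVec xD j| := neg_le_abs _
        _ ≤ θ * norm2 u1 * X := hrodot
    nlinarith only [mul_nonneg (mul_nonneg hθ0 hX0) ha0, mul_nonneg hθ0 hX0, hlb, hup, hδ', ha0]
  -- bound on u2
  have hAu2sq : ∑ j, A.mulVec u2 j ^ 2 = - ∑ j, A.mulVec u2 j * w j := by
    have h0 : ∑ i, u2 i * (∑ j, A j i * (A.mulVec u2 j + w j)) = 0 := by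
      apply Finset.sum_eq_zero; intro i _
      by_cases hi : i ∈ T
      · rw [hu2eq i hi, mul_zero]
      · rw [hu2off i hi, zero_mul]
    rw [dot_mulVec_swap A u2 (fun j => A.mulVec u2 j + w j)] at h0
    have h1 : ∑ j, (A.mulVec u2 j ^ 2 + A.mulVec u2 j * w j) = 0 := by
      rw [← h0]; apply Finset.sum_congr rfl; intro j _; ring
    rw [Finset.sum_add_distrib] at h1
    linarith
  have hn2Au2 : norm2 (A.mulVec u2) ≤ ε := by
    set t := norm2 (A.mulVec u2) with htdef
    have ht0 : 0 ≤ t := norm2_nonneg _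
    have htsq : t ^ 2 = ∑ j, (A.mulVec u2) j ^ 2 := sq_norm2 _
    have hup : t ^ 2 ≤ t * ε := by
      rw [htsq, hAu2sq]
      calc - ∑ j, A.mulVec u2 j * w j ≤ |∑ j, A.mulVec u2 j * w j| := neg_le_abs _
        _ ≤ norm2 (A.mulVec u2) * norm2 w := abs_dot_le _ _
        _ ≤ t * ε := mul_le_mul_of_nonneg_left hw ht0
    nlinarith only [hup, ht0, hε0]
  have hn2u2 : norm2 u2 ≤ Real.sqrt 2 * ε := by
    have ha0 : 0 ≤ norm2 u2 := norm2_nonneg u2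
    have hlb := (hrip' u2 hcardu2).1
    rw [← sq_norm2] at hlb
    have h2 : ∑ j, (A.mulVec u2) j ^ 2 ≤ ε ^ 2 := by
      have := sq_norm2 (A.mulVec u2)
      nlinarith only [this, hn2Au2, norm2_nonneg (A.mulVec u2), hε0]
    have hsq : (norm2 u2) ^ 2 ≤ 2 * ε ^ 2 := by nlinarith only [hlb, h2, hδ', ha0]
    calc norm2 u2 = Real.sqrt ((norm2 u2) ^ 2) := (Real.sqrt_sq ha0).symm
      _ ≤ Real.sqrt (2 * ε ^ 2) := Real.sqrt_le_sqrt hsq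
      _ = Real.sqrt 2 * ε := by rw [Real.sqrt_mul (by norm_num), Real.sqrt_sq hε0]
  have hn2u : norm2 u ≤ Real.sqrt 2 * ε + 2 * θ * X := by
    have : u = fun i => u1 i + u2 i := by
      funext i; simp [hu2]
    rw [this]
    calc norm2 (fun i => u1 i + u2 i) ≤ norm2 u1 + norm2 u2 := norm2_add_le _ _
      _ ≤ 2 * θ * X + Real.sqrt 2 * ε := add_le_add hn2u1 hn2u2
      _ = Real.sqrt 2 * ε + 2 * θ * X := by ring
  -- CS part
  obtain ⟨hfeas, hmin⟩ := hbeta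
  have hfb : norm2 (fun j => (((A.mulVec x) j + w j) - (A.mulVec xinit) j) - (A.mulVec b) j) ≤ ε := by
    have hweq : (fun j => (((A.mulVec x) j + w j) - (A.mulVec xinit) j) - (A.mulVec b) j) = w := by
      funext j; rw [congrFun hAbx j]; ring
    rw [hweq]; exact hw
  have hl1 : ∑ i, |betahat i| ≤ ∑ i, |b i| := by
    have := hmin b hfb
    simpa using this
  set h : Fin m → ℝ := fun i => betahat i - b i with hh
  have hn2Ah : norm2 (A.mulVec h) ≤ 2 * ε := by
    have h1 : A.mulVec h = fun j =>
        ((((A.mulVec x) j + w j) - (A.mulVec xinit) j) - A.mulVec b j)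
        + (-((((A.mulVec x) j + w j) - (A.mulVec xinit) j) - A.mulVec betahat j)) := by
      rw [hh, mulVec_fun_sub A betahat b]
      funext j; ring
    rw [h1]
    calc norm2 _ ≤ norm2 (fun j => (((A.mulVec x) j + w j) - (A.mulVec xinit) j) - A.mulVec b j)
          + norm2 (fun j => -((((A.mulVec x) j + w j) - (A.mulVec xinit) j) - A.mulVec betahat j)) :=
          norm2_add_le _ _
      _ = _ + norm2 (fun j => (((A.mulVec x) j + w j) - (A.mulVec xinit) j) - A.mulVec betahat j) := by
          rw [norm2_neg]
      _ ≤ ε + ε := add_le_add hfb hfeas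
      _ = 2 * ε := by ring
  -- cone constraint
  have hcone : ∑ i ∈ Δᶜ, |h i| ≤ ∑ i ∈ Δ, |h i| + 2 * ∑ i ∈ Δᶜ, |b i| := by
    have hbh : ∀ i, betahat i = b i + h i := by intro i; simp [hh]
    have h1 : ∀ i ∈ Δ, |b i| - |h i| ≤ |betahat i| := by
      intro i _
      rw [hbh i]
      have := abs_add_le (b i + h i) (-(h i))
      simp only [add_neg_cancel_right, abs_neg] at this
      linarith
    have h2 : ∀ i ∈ Δᶜ, |h i| - |b i| ≤ |betahat i| := by
      intro i _
      rw [hbh i]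
      have := abs_add_le (b i + h i) (-(b i))
      have heq : b i + h i + -(b i) = h i := by ring
      rw [heq, abs_neg] at this
      linarith
    have hs1 : ∑ i ∈ Δ, (|b i| - |h i|) ≤ ∑ i ∈ Δ, |betahat i| := Finset.sum_le_sum h1
    have hs2 : ∑ i ∈ Δᶜ, (|h i| - |b i|) ≤ ∑ i ∈ Δᶜ, |betahat i| := Finset.sum_le_sum h2
    rw [Finset.sum_sub_distrib] at hs1 hs2
    have hsplit1 : ∑ i ∈ Δ, |betahat i| + ∑ i ∈ Δᶜ, |betahat i| = ∑ i, |betahat i| :=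
      Finset.sum_add_sum_compl Δ _
    have hsplit2 : ∑ i ∈ Δ, |b i| + ∑ i ∈ Δᶜ, |b i| = ∑ i, |b i| :=
      Finset.sum_add_sum_compl Δ _
    linarith only [hs1, hs2, hsplit1, hsplit2, hl1]
  -- blocks
  set v : Fin m → ℝ := fun i => if i ∈ Δ then 0 else h i with hv
  obtain ⟨B, hBcard, hBdisj, hBcover, hBsum⟩ := tail_blocks (m := m) hS1 v
  set h₀ : Fin m → ℝ := restr Δ h with hh0
  set w0 : Fin m → ℝ := restr (B 0) v with hw0def
  set H01 : Fin m → ℝ := fun i => h₀ i + w0 i with hH01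
  set a : ℝ := norm2 H01 with ha
  set a0 : ℝ := norm2 h₀ with ha0def
  set a1 : ℝ := norm2 w0 with ha1def
  have hann : 0 ≤ a := norm2_nonneg _
  have ha0nn : 0 ≤ a0 := norm2_nonneg _
  have ha1nn : 0 ≤ a1 := norm2_nonneg _
  have hperp : ∀ i, h₀ i * w0 i = 0 := by
    intro i
    by_cases hi : i ∈ Δ
    · have : w0 i = 0 := by
        by_cases hB0 : i ∈ B 0 <;> simp [hw0def, restr, hv, hi, hB0]
      rw [this, mul_zero]
    · have : h₀ i = 0 := by simp [hh0, restr, hi]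
      rw [this, zero_mul]
  have hsq_split : a ^ 2 = a0 ^ 2 + a1 ^ 2 := by
    rw [ha, ha0def, ha1def, sq_norm2, sq_norm2, sq_norm2, ← Finset.sum_add_distrib]
    apply Finset.sum_congr rfl; intro i _
    have hexp : H01 i ^ 2 = h₀ i ^ 2 + w0 i ^ 2 + 2 * (h₀ i * w0 i) := by
      rw [hH01]; ring
    rw [hexp, hperp i]; ring
  have ha0le : a0 ≤ a := by nlinarith only [hsq_split, ha0nn, ha1nn, hann]
  have ha1le : a1 ≤ a := by nlinarith only [hsq_split, ha0nn, ha1nn, hann]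
  have ha01 : a0 + a1 ≤ Real.sqrt 2 * a := by
    have h1 : (a0 + a1) ^ 2 ≤ 2 * a ^ 2 := by nlinarith only [sq_nonneg (a0 - a1), hsq_split]
    calc a0 + a1 = Real.sqrt ((a0 + a1) ^ 2) := (Real.sqrt_sq (by positivity)).symm
      _ ≤ Real.sqrt (2 * a ^ 2) := Real.sqrt_le_sqrt h1
      _ = Real.sqrt 2 * a := by rw [Real.sqrt_mul (by norm_num), Real.sqrt_sq hann]
  have hsptH01 : spt H01 ⊆ Δ ∪ B 0 := by
    intro i hi
    simp only [spt, Finset.mem_filter, Finset.mem_univ, true_and] at hi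
    rw [Finset.mem_union]
    by_contra hc
    push_neg at hc
    have h1 : h₀ i = 0 := by simp [hh0, restr, hc.1]
    have h2 : w0 i = 0 := by simp [hw0def, restr, hc.2]
    exact hi (by rw [hH01]; simp [h1, h2])
  have hcardH01 : (spt H01).card ≤ 2 * S := by
    calc (spt H01).card ≤ (Δ ∪ B 0).card := Finset.card_le_card hsptH01
      _ ≤ Δ.card + (B 0).card := Finset.card_union_le _ _
      _ ≤ S + S := by
          have := hBcard 0
          omega
      _ = 2 * S := by ring
  have hm1 : 0 < m := by
    obtain ⟨i, _⟩ := hne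
    exact i.pos
  have hdecomp : h = fun i => H01 i + ∑ j ∈ Finset.Ico 1 m, restr (B j) v i := by
    funext i
    have hc := hBcover i
    have hsum0 : ∑ j ∈ Finset.range m, restr (B j) v i
        = restr (B 0) v i + ∑ j ∈ Finset.Ico 1 m, restr (B j) v i := by
      rw [Finset.range_eq_Ico, Finset.sum_eq_sum_Ico_succ_bot hm1]
    have hhv : h i = h₀ i + v i := by
      by_cases hi : i ∈ Δ <;> simp [hh0, restr, hv, hi]
    rw [hH01]
    simp only []
    rw [hhv, hc, hsum0, hw0def]
    ring
  set Sig1 : ℝ := ∑ j ∈ Finset.Ico 1 m, norm2 (restr (B j) v) with hSig1def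
  have hSig1nn : 0 ≤ Sig1 := Finset.sum_nonneg fun j _ => norm2_nonneg _
  set e1 : ℝ := ∑ i ∈ Δᶜ, |b i| with he1def
  have he1nn : 0 ≤ e1 := Finset.sum_nonneg fun i _ => abs_nonneg _
  have hsqrtSpos : 0 < Real.sqrt S := Real.sqrt_pos.mpr (by exact_mod_cast hS1)
  have hsqrtS1 : 1 ≤ Real.sqrt S := by
    rw [show (1:ℝ) = Real.sqrt 1 from (Real.sqrt_one).symm]
    exact Real.sqrt_le_sqrt (by exact_mod_cast hS1)
  set e0 : ℝ := e1 / Real.sqrt S with he0def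
  have he0nn : 0 ≤ e0 := div_nonneg he1nn (le_of_lt hsqrtSpos)
  have hvl1 : ∑ i, |v i| = ∑ i ∈ Δᶜ, |h i| := by
    rw [← Finset.sum_add_sum_compl Δ (fun i => |v i|)]
    have hz : ∑ i ∈ Δ, |v i| = 0 := Finset.sum_eq_zero fun i hi => by simp [hv, hi]
    rw [hz, zero_add]
    apply Finset.sum_congr rfl; intro i hi
    simp [hv, Finset.mem_compl.mp hi]
  have hΔl1 : ∑ i ∈ Δ, |h i| ≤ Real.sqrt S * a0 := by
    have := l1_le_sqrt_card Δ h
    rwa [← hh0, ← ha0def, ← hSdef] at this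
  have hSig1le : Sig1 ≤ a0 + 2 * e0 := by
    calc Sig1 ≤ (∑ i, |v i|) / Real.sqrt S := hBsum
      _ = (∑ i ∈ Δᶜ, |h i|) / Real.sqrt S := by rw [hvl1]
      _ ≤ (Real.sqrt S * a0 + 2 * e1) / Real.sqrt S := by
          refine div_le_div_of_nonneg_right ?_ (le_of_lt hsqrtSpos)
          linarith only [hcone, hΔl1]
      _ = a0 + 2 * e0 := by
          rw [he0def]; field_simp
  -- main RIP estimate
  have hAh_decomp : A.mulVec h = fun r =>
      A.mulVec H01 r + ∑ j ∈ Finset.Ico 1 m, A.mulVec (restr (B j) v) r := by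
    rw [hdecomp, mulVec_fun_add A H01 (fun i => ∑ j ∈ Finset.Ico 1 m, restr (B j) v i),
      mulVec_fun_sum A (Finset.Ico 1 m) (fun j => restr (B j) v)]
  have hkey : ∑ j, (A.mulVec H01 j) ^ 2 = (∑ j, A.mulVec H01 j * A.mulVec h j)
      - ∑ j' ∈ Finset.Ico 1 m, ∑ j, A.mulVec H01 j * A.mulVec (restr (B j') v) j := by
    have hexp : ∑ j, A.mulVec H01 j * A.mulVec h j
        = ∑ j, (A.mulVec H01 j) ^ 2
          + ∑ j' ∈ Finset.Ico 1 m, ∑ j, A.mulVec H01 j * A.mulVec (restr (B j') v) j := by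
      calc ∑ j, A.mulVec H01 j * A.mulVec h j
          = ∑ j, (A.mulVec H01 j ^ 2
            + ∑ j' ∈ Finset.Ico 1 m, A.mulVec H01 j * A.mulVec (restr (B j') v) j) := by
            apply Finset.sum_congr rfl; intro j _
            rw [congrFun hAh_decomp j, mul_add, Finset.mul_sum]
            ring_nf
        _ = _ := by
            rw [Finset.sum_add_distrib, Finset.sum_comm]
    linarith
  -- RIP bounds on H01
  have hlbH := (hrip H01 hcardH01).1
  have hubH := (hrip H01 hcardH01).2
  have hsumH : ∑ i, H01 i ^ 2 = a ^ 2 := (sq_norm2 H01).symm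
  rw [hsumH] at hlbH hubH
  have h1δ : (0:ℝ) ≤ 1 + δ := by linarith
  have hn2AH01 : norm2 (A.mulVec H01) ≤ Real.sqrt (1 + δ) * a := by
    apply norm2_le_of_sq_le (mul_nonneg (Real.sqrt_nonneg _) hann)
    rw [mul_pow, Real.sq_sqrt h1δ]
    exact hubH
  have hterm1 : ∑ j, A.mulVec H01 j * A.mulVec h j ≤ Real.sqrt (1 + δ) * a * (2 * ε) := by
    calc ∑ j, A.mulVec H01 j * A.mulVec h j ≤ norm2 (A.mulVec H01) * norm2 (A.mulVec h) :=
          dot_le _ _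
      _ ≤ (Real.sqrt (1 + δ) * a) * (2 * ε) :=
          mul_le_mul hn2AH01 hn2Ah (norm2_nonneg _) (by positivity)
  -- termwise RO bounds
  have hsptvj : ∀ j', spt (restr (B j') v) ⊆ B j' := fun j' => spt_restr_subset _ _
  have hsptvΔ : ∀ j' i, i ∈ spt (restr (B j') v) → i ∉ Δ := by
    intro j' i hi hiΔ
    simp only [spt, Finset.mem_filter, Finset.mem_univ, true_and, restr] at hi
    by_cases hB : i ∈ B j'
    · simp only [hB, if_true, hv, hiΔ] at hi
      simp [hiΔ] at hi
    · simp [hB] at hi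
  have hcardvj : ∀ j', (spt (restr (B j') v)).card ≤ S :=
    fun j' => le_trans (Finset.card_le_card (hsptvj j')) (hBcard j')
  have hspth0 : spt h₀ ⊆ Δ := spt_restr_subset _ _
  have hcardh0 : (spt h₀).card ≤ S := Finset.card_le_card hspth0
  have hsptw0 : spt w0 ⊆ B 0 := spt_restr_subset _ _
  have hcardw0 : (spt w0).card ≤ S := le_trans (Finset.card_le_card hsptw0) (hBcard 0)
  have htermj : ∀ j' ∈ Finset.Ico 1 m,
      |∑ j, A.mulVec H01 j * A.mulVec (restr (B j') v) j|
        ≤ δ * (a0 + a1) * norm2 (restr (B j') v) := by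
    intro j' hj'
    have hj'0 : j' ≠ 0 := by
      simp only [Finset.mem_Ico] at hj'; omega
    have hsplit : ∑ j, A.mulVec H01 j * A.mulVec (restr (B j') v) j
        = (∑ j, A.mulVec h₀ j * A.mulVec (restr (B j') v) j)
          + ∑ j, A.mulVec w0 j * A.mulVec (restr (B j') v) j := by
      rw [← Finset.sum_add_distrib]
      apply Finset.sum_congr rfl; intro j _
      rw [show A.mulVec H01 j = A.mulVec h₀ j + A.mulVec w0 j from by
        rw [hH01, congrFun (mulVec_fun_add A h₀ w0) j]]
      ring
    have hd1 : Disjoint (spt h₀) (spt (restr (B j') v)) := by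
      rw [Finset.disjoint_left]
      intro i hi hc
      exact hsptvΔ j' i hc (hspth0 hi)
    have hd2 : Disjoint (spt w0) (spt (restr (B j') v)) := by
      exact (hBdisj 0 j' (fun hc => hj'0 hc.symm)).mono hsptw0 (hsptvj j')
    have hro1 := ro_of_rip hRIP hd1 hcardh0 (hcardvj j')
    have hro2 := ro_of_rip hRIP hd2 hcardw0 (hcardvj j')
    rw [hsplit]
    calc |(∑ j, A.mulVec h₀ j * A.mulVec (restr (B j') v) j)
          + ∑ j, A.mulVec w0 j * A.mulVec (restr (B j') v) j|
        ≤ |∑ j, A.mulVec h₀ j * A.mulVec (restr (B j') v) j|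
          + |∑ j, A.mulVec w0 j * A.mulVec (restr (B j') v) j| := abs_add_le _ _
      _ ≤ δ * norm2 h₀ * norm2 (restr (B j') v) + δ * norm2 w0 * norm2 (restr (B j') v) :=
          add_le_add hro1 hro2
      _ = δ * (a0 + a1) * norm2 (restr (B j') v) := by
          rw [← ha0def, ← ha1def]; ring
  have hsumterm : ∑ j' ∈ Finset.Ico 1 m, ∑ j, A.mulVec H01 j * A.mulVec (restr (B j') v) j
      ≥ - (δ * (a0 + a1) * Sig1) := by
    have h1 : - ∑ j' ∈ Finset.Ico 1 m, ∑ j, A.mulVec H01 j * A.mulVec (restr (B j') v) j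
        ≤ δ * (a0 + a1) * Sig1 := by
      rw [← Finset.sum_neg_distrib]
      calc ∑ j' ∈ Finset.Ico 1 m, -(∑ j, A.mulVec H01 j * A.mulVec (restr (B j') v) j)
          ≤ ∑ j' ∈ Finset.Ico 1 m, δ * (a0 + a1) * norm2 (restr (B j') v) := by
            apply Finset.sum_le_sum
            intro j' hj'
            exact le_trans (neg_le_abs _) (htermj j' hj')
        _ = δ * (a0 + a1) * Sig1 := by
            rw [hSig1def, Finset.mul_sum]
    linarith only [h1]
  have hmain : (1 - δ) * a ^ 2 ≤ Real.sqrt (1 + δ) * a * (2 * ε) + δ * (a0 + a1) * Sig1 := by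
    linarith only [hkey, hlbH, hterm1, hsumterm]
  -- combine to bound a
  set D : ℝ := 1 - (Real.sqrt 2 + 1) * δ with hD
  have hsq2 : Real.sqrt 2 * Real.sqrt 2 = 2 := Real.mul_self_sqrt (by norm_num)
  have hDhalf : 1/2 ≤ D := by
    rw [hD]
    nlinarith only [Real.sqrt_nonneg 2, hsq2, hδ, hδ0]
  have hDpos : 0 < D := by linarith
  have hfacta : D * a ^ 2 ≤ (2 * Real.sqrt (1 + δ) * ε + 2 * Real.sqrt 2 * δ * e0) * a := by
    have hA1 : δ * (a0 + a1) * Sig1 ≤ δ * (Real.sqrt 2 * a) * (a + 2 * e0) := by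
      apply mul_le_mul
      · exact mul_le_mul_of_nonneg_left ha01 hδ0
      · linarith [hSig1le, ha0le]
      · exact hSig1nn
      · positivity
    have h2 : (1 - δ) * a ^ 2 ≤ Real.sqrt (1 + δ) * a * (2 * ε)
        + δ * (Real.sqrt 2 * a) * (a + 2 * e0) := le_trans hmain (by linarith)
    rw [hD]
    nlinarith only [h2]
  have ha_le : a ≤ (2 * Real.sqrt (1 + δ) * ε + 2 * Real.sqrt 2 * δ * e0) / D := by
    rcases eq_or_lt_of_le hann with h0 | hpos
    · rw [← h0]
      exact div_nonneg (add_nonneg (mul_nonneg (mul_nonneg zero_le_two (Real.sqrt_nonneg _)) hε0) (mul_nonneg (mul_nonneg (mul_nonneg zero_le_two (Real.sqrt_nonneg _)) hδ0) he0nn)) hDpos.le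
    · rw [le_div_iff₀ hDpos]
      nlinarith only [hfacta, hpos, hDpos]
  -- bound the total error
  have hn2h : norm2 h ≤ 2 * a + 2 * e0 := by
    rw [hdecomp]
    calc norm2 (fun i => H01 i + ∑ j ∈ Finset.Ico 1 m, restr (B j) v i)
        ≤ norm2 H01 + norm2 (fun i => ∑ j ∈ Finset.Ico 1 m, restr (B j) v i) := norm2_add_le _ _
      _ ≤ a + Sig1 := by
          rw [← ha]
          have := norm2_sum_le (Finset.Ico 1 m) (fun j => restr (B j) v)
          rw [← hSig1def] at this
          linarith only [this]
      _ ≤ 2 * a + 2 * e0 := by linarith only [hSig1le, ha0le]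
  have hstep1 : norm2 h ≤ C1 δ * ε + C2 δ * e0 := by
    have hC1eq : C1 δ = 4 * Real.sqrt (1 + δ) / D := by rw [C1, hD]
    have hC2eq : C2 δ = 2 * (1 + (Real.sqrt 2 - 1) * δ) / D := by rw [C2, hD]
    have heq : 2 * ((2 * Real.sqrt (1 + δ) * ε + 2 * Real.sqrt 2 * δ * e0) / D) + 2 * e0
        = (4 * Real.sqrt (1 + δ) / D) * ε + (2 * (1 + (Real.sqrt 2 - 1) * δ) / D) * e0 := by
      field_simp
      ring
    rw [hC1eq, hC2eq, ← heq]
    linarith only [hn2h, ha_le]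
  have hC2nn : 0 ≤ C2 δ := by
    rw [C2]
    have : (0:ℝ) ≤ 1 + (Real.sqrt 2 - 1) * δ := by nlinarith only [hsqrt2, hδ0]
    positivity
  -- bound e0 using the LS estimate
  have hTsub : T ⊆ Δᶜ := by
    intro i hi
    rw [Finset.mem_compl]
    exact Finset.disjoint_left.mp hdisjTΔ hi
  have he1T : e1 = ∑ i ∈ T, |b i| := by
    rw [he1def]
    symm
    apply Finset.sum_subset hTsub
    intro i hiC hiT
    have hiΔ : i ∉ Δ := Finset.mem_compl.mp hiC
    have hb0 : b i = 0 := by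
      rw [hbu i, huoff i hiT, hxD]
      simp [restr, hiΔ]
    rw [hb0, abs_zero]
  have he1u : e1 ≤ Real.sqrt T.card * norm2 u := by
    rw [he1T]
    have := l1_le_sqrt_card T b
    rwa [← hu] at this
  have he0le : e0 ≤ Real.sqrt T.card * (Real.sqrt 2 * ε + 2 * θ * X) / Real.sqrt S := by
    rw [he0def]
    have h2 : e1 ≤ Real.sqrt T.card * (Real.sqrt 2 * ε + 2 * θ * X) :=
      le_trans he1u (mul_le_mul_of_nonneg_left hn2u (Real.sqrt_nonneg _))
    exact div_le_div_of_nonneg_right h2 (Real.sqrt_nonneg _)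
  have hLHS : norm2 (fun i => x i - (xinit i + betahat i)) = norm2 h := by
    have hfe : (fun i => x i - (xinit i + betahat i)) = fun i => -(h i) := by
      funext i; simp only [hh, hb]; ring
    rw [hfe, norm2_neg]
  rw [hLHS]
  have hTS : Real.sqrt ((T.card : ℝ) / (S : ℝ)) = Real.sqrt (T.card : ℝ) / Real.sqrt (S : ℝ) :=
    Real.sqrt_div (Nat.cast_nonneg _) _
  calc norm2 h ≤ C1 δ * ε + C2 δ * e0 := hstep1
    _ ≤ C1 δ * ε + C2 δ * (Real.sqrt T.card * (Real.sqrt 2 * ε + 2 * θ * X) / Real.sqrt S) := by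
        have := mul_le_mul_of_nonneg_left he0le hC2nn
        linarith only [this]
    _ = (C1 δ + Real.sqrt 2 * C2 δ * (Real.sqrt (T.card : ℝ) / Real.sqrt (S : ℝ))) * ε
        + θ * (2 * C2 δ * (Real.sqrt (T.card : ℝ) / Real.sqrt (S : ℝ))) * X := by ring
    _ ≤ (C1 δ + Real.sqrt 2 * C2 δ * Real.sqrt ((T.card : ℝ) / (S : ℝ))) * ε
        + θ * (2 * C2 δ * Real.sqrt (T.card : ℝ)) * X := by
        rw [hTS]
        have hdiv : Real.sqrt (T.card : ℝ) / Real.sqrt (S : ℝ) ≤ Real.sqrt (T.card : ℝ) :=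
          div_le_self (Real.sqrt_nonneg _) hsqrtS1
        have hmono : θ * (2 * C2 δ * (Real.sqrt (T.card : ℝ) / Real.sqrt (S : ℝ))) * X
            ≤ θ * (2 * C2 δ * Real.sqrt (T.card : ℝ)) * X := by
          apply mul_le_mul_of_nonneg_right _ hX0
          apply mul_le_mul_of_nonneg_left _ hθ0
          apply mul_le_mul_of_nonneg_left hdiv (by positivity)
        linarith only [hmono]
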